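/- Let q be prime and s ∈ ℕ. The set of (f_1,...,f_s) ∈ Z̄^s for which there exist infinitely many s-tuples (k_1,...,k_s) of nonzero polynomials with gcd 1 satisfying both ν({k_1 f_1 + ⋯ + k_s f_s}) ≤ −(r_1+⋯+r_s) and ν({(k_1+β_1(k_1)) f_1 + ⋯ + (k_s+β_s(k_s)) f_s}) ≤ −⌊(r_1+⋯+r_s)/2⌋ (where r_j = deg(k_j) and β_j(k_j) are given polynomials, not all zero, each zero or coprime to k_j) has μ_s-measure zero. -/

import Mathlib

open MeasureTheory Finset
open scoped ENNReal

/-- The `(n+1)`-st digit `ξ_{n+1} ∈ Z_q` of the `q`-adic expansion of a real number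
`x ∈ [0,1)`; via `x ↔ ∑_k ξ_k x^{-k}` this identifies `x` with an element of the
set `Z̄ ⊆ F_q((x^{-1}))` of Laurent series with zero polynomial part, in such a way
that the normalized Haar measure on `Z̄` corresponds to Lebesgue measure on `[0,1)`. -/
noncomputable def qDigit (q : ℕ) (x : ℝ) (n : ℕ) : ZMod q :=
  ((⌊x * (q : ℝ) ^ (n + 1)⌋ : ℤ) : ZMod q)

/-- The coefficient of `x^{-(m+1)}` of the product `k(x)·f(x)` in `F_q((x^{-1}))`,
where the Laurent series `f = ∑_{j≥0} f_j x^{-(j+1)}` is given by its coefficient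
sequence.  In particular `ν({k·f}) ≤ -M` iff `fracCoeff q k f n = 0` for all `n`
with `n + 2 ≤ M`. -/
def fracCoeff (q : ℕ) (k : Polynomial (ZMod q)) (f : ℕ → ZMod q) (m : ℕ) : ZMod q :=
  ∑ j ∈ Finset.range (k.natDegree + 1), k.coeff j * f (m + j)

/-- The (monic) gcd of the tuple `k` is `1`: every common divisor is a unit. -/
def GcdOne {q s : ℕ} (k : Fin s → Polynomial (ZMod q)) : Prop :=
  ∀ d : Polynomial (ZMod q), (∀ i, d ∣ k i) → IsUnit d

lemma digits_inj {q : ℕ} (hq : 1 < q) : ∀ (N : ℕ) (a b : ℕ), a < q^N → b < q^N →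
    (∀ t, t < N → ((a / q^t : ℕ) : ZMod q) = ((b / q^t : ℕ) : ZMod q)) → a = b := by
  have hq0 : 0 < q := lt_trans one_pos hq
  intro N
  induction N with
  | zero => intro a b ha hb _; simp only [pow_zero] at ha hb; omega
  | succ N ih =>
    intro a b ha hb hdig
    have h0 : a % q = b % q := by
      have h := hdig 0 (Nat.succ_pos N)
      simp only [pow_zero, Nat.div_one] at h
      exact (ZMod.natCast_eq_natCast_iff a b q).mp h
    have hrec : a / q = b / q := by
      apply ih (a / q) (b / q)
      · rw [Nat.div_lt_iff_lt_mul hq0]; rw [pow_succ] at ha; exact ha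
      · rw [Nat.div_lt_iff_lt_mul hq0]; rw [pow_succ] at hb; exact hb
      · intro t ht
        have e1 : a / q / q^t = a / q^(t+1) := by
          rw [Nat.div_div_eq_div_mul, ← pow_succ']
        have e2 : b / q / q^t = b / q^(t+1) := by
          rw [Nat.div_div_eq_div_mul, ← pow_succ']
        rw [e1, e2]
        exact hdig (t+1) (by omega)
    conv_lhs => rw [← Nat.div_add_mod a q]
    conv_rhs => rw [← Nat.div_add_mod b q]
    rw [hrec, h0]

lemma qDigit_eq {q : ℕ} (hq : 1 < q) {N : ℕ} {a : ℕ} {x : ℝ}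
    (hx1 : (a : ℝ)/(q:ℝ)^N ≤ x) (hx2 : x < ((a : ℝ)+1)/(q:ℝ)^N) {n : ℕ} (hn : n < N) :
    qDigit q x n = ((a / q^(N-1-n) : ℕ) : ZMod q) := by
  have hq0 : (0:ℝ) < q := by exact_mod_cast lt_trans one_pos hq
  have hqN : (0:ℝ) < (q:ℝ)^N := pow_pos hq0 _
  set D : ℕ := q^(N-1-n) with hD
  set A : ℕ := a / D with hA
  have hDnat : 0 < D := Nat.pow_pos (lt_trans one_pos hq)
  have hDr : (0:ℝ) < (D:ℝ) := by exact_mod_cast hDnat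
  have hE : (q:ℝ)^N = (q:ℝ)^(n+1) * (D:ℝ) := by
    rw [hD]; push_cast; rw [← pow_add]; congr 1; omega
  have hA1 : (A:ℝ) * D ≤ a := by exact_mod_cast Nat.div_mul_le_self a D
  have hA2nat : a + 1 ≤ (A + 1) * D := by
    have h1 := Nat.div_add_mod a D
    have h2 := Nat.mod_lt a hDnat
    have e : D * (a / D) = A * D := by rw [hA, mul_comm]
    rw [add_mul, one_mul]
    linarith
  have hA2 : (a:ℝ) + 1 ≤ ((A:ℝ) + 1) * D := by exact_mod_cast hA2nat
  have hx1' : (a:ℝ) ≤ x * (q:ℝ)^N := by rwa [div_le_iff₀ hqN] at hx1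
  have hx2' : x * (q:ℝ)^N < (a:ℝ) + 1 := by rwa [lt_div_iff₀ hqN] at hx2
  have hxE : x * (q:ℝ)^N = x * (q:ℝ)^(n+1) * (D:ℝ) := by rw [hE, mul_assoc]
  have hfloor : ⌊x * (q:ℝ)^(n+1)⌋ = (A : ℤ) := by
    rw [Int.floor_eq_iff]
    constructor
    · push_cast
      have hmul : (A:ℝ) * D ≤ x * (q:ℝ)^(n+1) * D := by
        calc (A:ℝ) * D ≤ a := hA1
          _ ≤ x * (q:ℝ)^N := hx1'
          _ = x * (q:ℝ)^(n+1) * D := hxE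
      exact le_of_mul_le_mul_right hmul hDr
    · push_cast
      have hmul : x * (q:ℝ)^(n+1) * D < ((A:ℝ) + 1) * D := by
        calc x * (q:ℝ)^(n+1) * D = x * (q:ℝ)^N := hxE.symm
          _ < (a:ℝ) + 1 := hx2'
          _ ≤ ((A:ℝ) + 1) * D := hA2
      exact lt_of_mul_lt_mul_right hmul (le_of_lt hDr)
  rw [qDigit, hfloor]
  simp

-- helper: fracCoeff only depends on finitely many values, is additive etc.
lemma fracCoeff_congr {q : ℕ} (p : Polynomial (ZMod q)) {f g : ℕ → ZMod q} (n : ℕ)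
    (h : ∀ j, j ≤ p.natDegree → f (n + j) = g (n + j)) :
    fracCoeff q p f n = fracCoeff q p g n := by
  unfold fracCoeff
  exact Finset.sum_congr rfl fun j hj => by
    rw [h j (by simpa [Nat.lt_succ_iff] using hj)]

lemma fracCoeff_add {q : ℕ} (p : Polynomial (ZMod q)) (f g h : ℕ → ZMod q)
    (hh : ∀ t, h t = f t + g t) (n : ℕ) :
    fracCoeff q p h n = fracCoeff q p f n + fracCoeff q p g n := by
  simp [fracCoeff, hh, mul_add, Finset.sum_add_distrib]

lemma fracCoeff_smul {q : ℕ} (p : Polynomial (ZMod q)) (c : ZMod q) (f h : ℕ → ZMod q)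
    (hh : ∀ t, h t = c * f t) (n : ℕ) :
    fracCoeff q p h n = c * fracCoeff q p f n := by
  simp [fracCoeff, hh, Finset.mul_sum]
  exact Finset.sum_congr rfl fun j _ => by ring

open Polynomial in
lemma fracCoeff_delta {q : ℕ} (p : Polynomial (ZMod q)) (t n : ℕ) (g : ℕ → ZMod q)
    (hg : ∀ u, g u = if u = t then 1 else 0) :
    fracCoeff q p g n = if n ≤ t then p.coeff (t - n) else 0 := by
  unfold fracCoeff
  simp only [hg]
  by_cases hn : n ≤ t
  · rw [if_pos hn]
    have : ∀ j ∈ Finset.range (p.natDegree + 1),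
        p.coeff j * (if n + j = t then (1 : ZMod q) else 0)
          = if j = t - n then p.coeff j else 0 := by
      intro j _
      by_cases hj : n + j = t
      · rw [if_pos hj, if_pos (by omega), mul_one]
      · rw [if_neg hj, if_neg (by omega), mul_zero]
    rw [Finset.sum_congr rfl this, Finset.sum_ite_eq' (Finset.range (p.natDegree + 1))]
    by_cases h2 : t - n ∈ Finset.range (p.natDegree + 1)
    · rw [if_pos h2]
    · rw [if_neg h2]
      rw [Finset.mem_range] at h2
      exact (Polynomial.coeff_eq_zero_of_natDegree_lt (by omega)).symm
  · rw [if_neg hn]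
    exact Finset.sum_eq_zero fun j _ => by rw [if_neg (by omega), mul_zero]

lemma fracCoeff_zero {q : ℕ} (p : Polynomial (ZMod q)) (g : ℕ → ZMod q)
    (hg : ∀ u, g u = 0) (n : ℕ) : fracCoeff q p g n = 0 := by
  simp [fracCoeff, hg]


lemma poly_alg {F : Type*} [Field F] [DecidableEq F] {s : ℕ}
    (k : Fin s → Polynomial F) (Bk : Fin s → Polynomial F)
    (hk : ∀ i, k i ≠ 0) (hgcd : ∀ d : Polynomial F, (∀ i, d ∣ k i) → IsUnit d)
    (hB : ∀ i, Bk i = 0 ∨ IsCoprime (Bk i) (k i)) (hB0 : ¬ ∀ i, Bk i = 0)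
    (i0 : Fin s) (hi0 : ¬ IsUnit (k i0))
    (a b : Polynomial F) (h : ∀ i, a * k i + b * (k i + Bk i) = 0) :
    a = 0 ∧ b = 0 := by
  have h' : ∀ i, (a + b) * k i + b * Bk i = 0 := by
    intro i; have := h i; ring_nf at this ⊢; linear_combination this
  by_cases hb : b = 0
  · refine ⟨?_, hb⟩
    have := h' i0
    rw [hb] at this
    simpa [hk i0, hb] using this
  · exfalso
    by_cases hc : a + b = 0
    · apply hB0
      intro i
      have := h' i
      rw [hc] at this
      simpa [hb] using this
    · have hBi : ∀ i, IsCoprime (Bk i) (k i) := by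
        intro i
        rcases hB i with h0 | hcop
        · exfalso
          have := h' i
          rw [h0] at this
          simp only [mul_zero, add_zero, mul_eq_zero] at this
          exact absurd this (by simp [hc, hk i])
        · exact hcop
      set d := GCDMonoid.gcd b (a + b) with hd
      have hdb : d ∣ b := gcd_dvd_left _ _
      have hdc : d ∣ (a + b) := gcd_dvd_right _ _
      have hdne : d ≠ 0 := fun h0 => hb ((gcd_eq_zero_iff _ _).mp h0).1
      have hcop' : IsCoprime (b / d) ((a + b) / d) := isCoprime_div_gcd_div_gcd hc
      have hbd : d * (b / d) = b := EuclideanDomain.mul_div_cancel' hdne hdb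
      have hcd : d * ((a + b) / d) = a + b := EuclideanDomain.mul_div_cancel' hdne hdc
      have key : ∀ i, ((a + b) / d) * k i = -((b / d) * Bk i) := by
        intro i
        have hh := h' i
        apply mul_left_cancel₀ hdne
        rw [mul_neg, ← mul_assoc, ← mul_assoc, hbd, hcd]
        linear_combination hh
      have hbu : IsUnit (b / d) := by
        apply hgcd
        intro i
        refine hcop'.dvd_of_dvd_mul_left ?_
        rw [key i]
        exact (dvd_mul_right _ _).neg_right
      have hk0 : k i0 ∣ Bk i0 := by
        have : k i0 ∣ (b / d) * Bk i0 := by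
          rw [show (b / d) * Bk i0 = -(((a + b) / d) * k i0) by linear_combination key i0]
          exact (dvd_mul_left _ _).neg_right
        exact (hbu.dvd_mul_left).mp this
      exact hi0 ((hBi i0).isUnit_of_dvd' hk0 dvd_rfl)

open Polynomial in
lemma measure_Ek_le {q : ℕ} (hq : q.Prime) {s : ℕ} (hs : 1 ≤ s)
    (B : Fin s → Polynomial (ZMod q) → Polynomial (ZMod q))
    (hB : ∀ j kk, B j kk = 0 ∨ IsCoprime (B j kk) kk)
    (hB0 : ∀ kk : Fin s → Polynomial (ZMod q), ¬ ∀ j, B j (kk j) = 0)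
    (k : Fin s → Polynomial (ZMod q)) (hk : ∀ i, k i ≠ 0) (hgcd : GcdOne k)
    (hm1 : 1 ≤ ∑ i, (k i).natDegree) :
    volume {f : Fin s → ℝ | (∀ i, f i ∈ Set.Ico (0:ℝ) 1) ∧
      (∀ n : ℕ, n + 2 ≤ ∑ i, (k i).natDegree →
        ∑ i, fracCoeff q (k i) (qDigit q (f i)) n = 0) ∧
      (∀ n : ℕ, n + 2 ≤ (∑ i, (k i).natDegree) / 2 →
        ∑ i, fracCoeff q (k i + B i (k i)) (qDigit q (f i)) n = 0)} ≤
      ((q : ℝ≥0∞)⁻¹) ^ ((∑ i, (k i).natDegree) - 1 + ((∑ i, (k i).natDegree) / 2 - 1)) := by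
  classical
  haveI := Fact.mk hq
  haveI : NeZero q := ⟨hq.ne_zero⟩
  have hq1 : 1 < q := hq.one_lt
  set m := ∑ i, (k i).natDegree with hm_def
  set k' : Fin s → Polynomial (ZMod q) := fun i => k i + B i (k i) with hk'_def
  set R1 := m - 1 with hR1
  set R2 := m / 2 - 1 with hR2
  set Mq := ∑ i, (k' i).natDegree with hMq
  set N := 2*m + Mq + 2 with hNdef
  have hdegk : ∀ i, (k i).natDegree ≤ m :=
    fun i => Finset.single_le_sum (f := fun i => (k i).natDegree) (fun _ _ => Nat.zero_le _)
      (Finset.mem_univ i)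
  have hdegk' : ∀ i, (k' i).natDegree ≤ Mq :=
    fun i => Finset.single_le_sum (f := fun i => (k' i).natDegree) (fun _ _ => Nat.zero_le _)
      (Finset.mem_univ i)
  -- the extension-by-zero operator
  set ext0 : (Fin N → ZMod q) → ℕ → ZMod q :=
    fun w t => if h : t < N then w ⟨t, h⟩ else 0 with hext0
  -- the linear map encoding all the conditions
  set T : (Fin s → Fin N → ZMod q) →ₗ[ZMod q] ((Fin R1 ⊕ Fin R2) → ZMod q) :=
    { toFun := fun w c => Sum.elim
        (fun n : Fin R1 => ∑ i, fracCoeff q (k i) (ext0 (w i)) (n : ℕ))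
        (fun n : Fin R2 => ∑ i, fracCoeff q (k' i) (ext0 (w i)) (n : ℕ)) c
      map_add' := by
        intro w w'; funext c
        have hradd : ∀ (i : Fin s) t, ext0 ((w + w') i) t = ext0 (w i) t + ext0 (w' i) t := by
          intro i t
          simp only [hext0, Pi.add_apply]
          split <;> simp
        cases c with
        | inl n =>
          simp only [Sum.elim_inl, Pi.add_apply]
          rw [← Finset.sum_add_distrib]
          exact Finset.sum_congr rfl fun i _ => fracCoeff_add _ _ _ _ (hradd i) _
        | inr n =>
          simp only [Sum.elim_inr, Pi.add_apply]
          rw [← Finset.sum_add_distrib]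
          exact Finset.sum_congr rfl fun i _ => fracCoeff_add _ _ _ _ (hradd i) _
      map_smul' := by
        intro c w; funext d
        have hrsmul : ∀ (i : Fin s) t, ext0 ((c • w) i) t = c * ext0 (w i) t := by
          intro i t
          simp only [hext0, Pi.smul_apply, smul_eq_mul]
          split <;> simp
        cases d with
        | inl n =>
          simp only [Sum.elim_inl, Pi.smul_apply, smul_eq_mul, RingHom.id_apply]
          rw [Finset.mul_sum]
          exact Finset.sum_congr rfl fun i _ => fracCoeff_smul _ _ _ _ (hrsmul i) _
        | inr n =>
          simp only [Sum.elim_inr, Pi.smul_apply, smul_eq_mul, RingHom.id_apply]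
          rw [Finset.mul_sum]
          exact Finset.sum_congr rfl fun i _ => fracCoeff_smul _ _ _ _ (hrsmul i) _ } with hT
  have hsurj : Function.Surjective T := by
    rw [← LinearMap.range_eq_top]
    by_contra hne
    obtain ⟨φ, hφne, hφbot⟩ :=
      Submodule.exists_dual_map_eq_bot_of_lt_top (lt_top_iff_ne_top.mpr hne) inferInstance
    have hφT : ∀ w, φ (T w) = 0 := by
      intro w
      have h1 : φ (T w) ∈ (LinearMap.range T).map φ :=
        Submodule.mem_map_of_mem (LinearMap.mem_range_self T w)
      rw [hφbot] at h1
      exact (Submodule.mem_bot _).mp h1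
    set aco : Fin R1 → ZMod q := fun n => φ (Pi.single (Sum.inl n) 1) with haco
    set bco : Fin R2 → ZMod q := fun n => φ (Pi.single (Sum.inr n) 1) with hbco
    have hv : ∀ v : (Fin R1 ⊕ Fin R2) → ZMod q, φ v = ∑ c, v c * φ (Pi.single c 1) := by
      intro v
      conv_lhs => rw [← Finset.univ_sum_single v]
      rw [map_sum]
      apply Finset.sum_congr rfl
      intro c _
      have hs1 : φ (Pi.single c (v c)) = v c • φ (Pi.single c (1 : ZMod q)) := by
        rw [← _root_.map_smul]
        congr 1
        funext d
        by_cases hd : d = c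
        · subst hd; simp
        · simp [Pi.single_eq_of_ne hd]
      rw [hs1, smul_eq_mul]
    set PA : Polynomial (ZMod q) := ∑ n : Fin R1, C (aco n) * X^(n:ℕ) with hPA
    set PB : Polynomial (ZMod q) := ∑ n : Fin R2, C (bco n) * X^(n:ℕ) with hPB
    have hPAco : ∀ (p : Polynomial (ZMod q)) (t : ℕ), (PA * p).coeff t
        = ∑ n : Fin R1, aco n * (if (n:ℕ) ≤ t then p.coeff (t - (n:ℕ)) else 0) := by
      intro p t
      have hmul : PA * p = ∑ n : Fin R1, C (aco n) * (p * X^(n:ℕ)) := by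
        rw [hPA, Finset.sum_mul]
        exact Finset.sum_congr rfl fun n _ => by ring
      rw [hmul, finset_sum_coeff]
      exact Finset.sum_congr rfl fun n _ => by rw [coeff_C_mul, coeff_mul_X_pow']
    have hPBco : ∀ (p : Polynomial (ZMod q)) (t : ℕ), (PB * p).coeff t
        = ∑ n : Fin R2, bco n * (if (n:ℕ) ≤ t then p.coeff (t - (n:ℕ)) else 0) := by
      intro p t
      have hmul : PB * p = ∑ n : Fin R2, C (bco n) * (p * X^(n:ℕ)) := by
        rw [hPB, Finset.sum_mul]
        exact Finset.sum_congr rfl fun n _ => by ring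
      rw [hmul, finset_sum_coeff]
      exact Finset.sum_congr rfl fun n _ => by rw [coeff_C_mul, coeff_mul_X_pow']
    have hdelta : ∀ (i : Fin s) (t : ℕ), t < N → (PA * k i + PB * k' i).coeff t = 0 := by
      intro i t ht
      set δ : Fin s → Fin N → ZMod q :=
        fun i' n' => if (i' = i ∧ (n' : ℕ) = t) then 1 else 0 with hδ
      have hext : ∀ (i' : Fin s) (u : ℕ), ext0 (δ i') u
          = if i' = i then (if u = t then (1 : ZMod q) else 0) else 0 := by
        intro i' u
        by_cases hu : u < N
        · simp only [hext0, dif_pos hu, hδ]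
          by_cases hi : i' = i
          · simp [hi]
          · simp [hi]
        · simp only [hext0, dif_neg hu]
          have hut : ¬ (u = t) := by omega
          by_cases hi : i' = i <;> simp [hi, hut]
      have hTδl : ∀ n : Fin R1, T δ (Sum.inl n)
          = if (n:ℕ) ≤ t then (k i).coeff (t - (n:ℕ)) else 0 := by
        intro n
        simp only [hT, LinearMap.coe_mk, AddHom.coe_mk, Sum.elim_inl]
        rw [Finset.sum_eq_single i]
        · exact fracCoeff_delta (k i) t (n:ℕ) _ (fun u => by rw [hext i u]; simp)
        · intro i' _ hne'
          exact fracCoeff_zero _ _ (fun u => by rw [hext i' u]; simp [hne']) _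
        · intro h; exact absurd (Finset.mem_univ i) h
      have hTδr : ∀ n : Fin R2, T δ (Sum.inr n)
          = if (n:ℕ) ≤ t then (k' i).coeff (t - (n:ℕ)) else 0 := by
        intro n
        simp only [hT, LinearMap.coe_mk, AddHom.coe_mk, Sum.elim_inr]
        rw [Finset.sum_eq_single i]
        · exact fracCoeff_delta (k' i) t (n:ℕ) _ (fun u => by rw [hext i u]; simp)
        · intro i' _ hne'
          exact fracCoeff_zero _ _ (fun u => by rw [hext i' u]; simp [hne']) _
        · intro h; exact absurd (Finset.mem_univ i) h
      have h0 := hφT δ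
      rw [hv (T δ), Fintype.sum_sum_type] at h0
      rw [coeff_add, hPAco (k i) t, hPBco (k' i) t]
      have e1 : ∀ n : Fin R1, aco n * (if (n:ℕ) ≤ t then (k i).coeff (t - (n:ℕ)) else 0)
          = T δ (Sum.inl n) * φ (Pi.single (Sum.inl n) 1) := by
        intro n; rw [hTδl n]; ring
      have e2 : ∀ n : Fin R2, bco n * (if (n:ℕ) ≤ t then (k' i).coeff (t - (n:ℕ)) else 0)
          = T δ (Sum.inr n) * φ (Pi.single (Sum.inr n) 1) := by
        intro n; rw [hTδr n]; ring
      rw [Finset.sum_congr rfl (fun n _ => e1 n), Finset.sum_congr rfl (fun n _ => e2 n)]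
      exact h0
    have hdegPA : PA.natDegree ≤ m := by
      apply natDegree_sum_le_of_forall_le
      intro n _
      refine le_trans (natDegree_C_mul_le _ _) ?_
      rw [natDegree_X_pow]
      have := n.isLt; omega
    have hdegPB : PB.natDegree ≤ m := by
      apply natDegree_sum_le_of_forall_le
      intro n _
      refine le_trans (natDegree_C_mul_le _ _) ?_
      rw [natDegree_X_pow]
      have := n.isLt; omega
    have hzero : ∀ i, PA * k i + PB * (k i + B i (k i)) = 0 := by
      intro i
      have hzero' : PA * k i + PB * k' i = 0 := by
        apply Polynomial.ext
        intro t
        by_cases ht : t < N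
        · rw [hdelta i t ht, coeff_zero]
        · rw [coeff_zero, coeff_add]
          have d1 : (PA * k i).natDegree < t := by
            refine lt_of_le_of_lt (natDegree_mul_le) ?_
            have := hdegk i; omega
          have d2 : (PB * k' i).natDegree < t := by
            refine lt_of_le_of_lt (natDegree_mul_le) ?_
            have := hdegk' i; omega
          rw [coeff_eq_zero_of_natDegree_lt d1, coeff_eq_zero_of_natDegree_lt d2, add_zero]
      simpa [hk'_def] using hzero'
    obtain ⟨i0, hi0deg⟩ : ∃ i, 1 ≤ (k i).natDegree := by
      by_contra hno
      push_neg at hno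
      have hzm : m = 0 := by
        rw [hm_def]
        apply Finset.sum_eq_zero
        intro i _
        have := hno i; omega
      omega
    have hnu : ¬ IsUnit (k i0) := by
      intro hu
      have := natDegree_eq_zero_of_isUnit hu
      omega
    obtain ⟨hPA0, hPB0⟩ := poly_alg k (fun i => B i (k i)) hk (fun d hd => hgcd d hd)
      (fun i => hB i (k i)) (hB0 k) i0 hnu PA PB hzero
    apply hφne
    have hall : ∀ c : Fin R1 ⊕ Fin R2, φ (Pi.single c (1 : ZMod q)) = 0 := by
      intro c
      cases c with
      | inl n =>
        have hcoeff : aco n = PA.coeff (n : ℕ) := by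
          rw [hPA, finset_sum_coeff]
          rw [Finset.sum_congr rfl (fun n' (_ : n' ∈ Finset.univ) => by
            rw [coeff_C_mul, coeff_X_pow])]
          rw [Finset.sum_eq_single n]
          · simp
          · intro n' _ hne'
            rw [if_neg (fun h => hne' (Fin.ext (Eq.symm h))), mul_zero]
          · intro h; exact absurd (Finset.mem_univ n) h
        have : aco n = 0 := by rw [hcoeff, hPA0, coeff_zero]
        rw [← this, haco]
      | inr n =>
        have hcoeff : bco n = PB.coeff (n : ℕ) := by
          rw [hPB, finset_sum_coeff]
          rw [Finset.sum_congr rfl (fun n' (_ : n' ∈ Finset.univ) => by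
            rw [coeff_C_mul, coeff_X_pow])]
          rw [Finset.sum_eq_single n]
          · simp
          · intro n' _ hne'
            rw [if_neg (fun h => hne' (Fin.ext (Eq.symm h))), mul_zero]
          · intro h; exact absurd (Finset.mem_univ n) h
        have : bco n = 0 := by rw [hcoeff, hPB0, coeff_zero]
        rw [← this, hbco]
    apply LinearMap.ext
    intro v
    rw [hv v, LinearMap.zero_apply]
    apply Finset.sum_eq_zero
    intro c _
    rw [hall c, mul_zero]
  have hcard : Nat.card (LinearMap.ker T) * q ^ (R1 + R2) = q ^ (N * s) := by
    have eW : Nat.card ((Fin R1 ⊕ Fin R2) → ZMod q) = q ^ (R1+R2) := by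
      rw [Nat.card_eq_fintype_card, Fintype.card_fun]
      simp [ZMod.card]
    have eV : Nat.card (Fin s → Fin N → ZMod q) = q ^ (N*s) := by
      rw [Nat.card_eq_fintype_card, Fintype.card_fun, Fintype.card_fun]
      simp [ZMod.card, ← pow_mul]
    have equot : Nat.card ((Fin s → Fin N → ZMod q) ⧸ LinearMap.ker T) = q ^ (R1+R2) := by
      rw [Nat.card_congr (T.quotKerEquivOfSurjective hsurj).toEquiv, eW]
    have hsplit := Submodule.card_eq_card_quotient_mul_card (LinearMap.ker T)
    rw [eV, equot] at hsplit
    exact hsplit.symm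
  -- decode and boxes
  set wv : (Fin s → Fin (q^N)) → (Fin s → Fin N → ZMod q) :=
    fun a i n => (((a i : ℕ) / q^(N - 1 - (n : ℕ)) : ℕ) : ZMod q) with hwv
  set AS : Finset (Fin s → Fin (q^N)) := Finset.univ.filter (fun a => T (wv a) = 0) with hAS
  set Box : (Fin s → Fin (q^N)) → Set (Fin s → ℝ) := fun a =>
    Set.pi Set.univ (fun i =>
      Set.Ico (((a i : ℕ) : ℝ)/(q:ℝ)^N) ((((a i : ℕ) : ℝ)+1)/(q:ℝ)^N)) with hBox
  have hsub : {f : Fin s → ℝ | (∀ i, f i ∈ Set.Ico (0:ℝ) 1) ∧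
      (∀ n : ℕ, n + 2 ≤ m → ∑ i, fracCoeff q (k i) (qDigit q (f i)) n = 0) ∧
      (∀ n : ℕ, n + 2 ≤ m / 2 → ∑ i, fracCoeff q (k' i) (qDigit q (f i)) n = 0)} ⊆
      ⋃ a ∈ AS, Box a := by
    intro f hf
    obtain ⟨hbox, hc1, hc2⟩ := hf
    have hqNR : (0:ℝ) < (q:ℝ)^N := pow_pos (by exact_mod_cast hq.pos) N
    have hfl0 : ∀ i, 0 ≤ ⌊f i * (q:ℝ)^N⌋ := fun i =>
      Int.floor_nonneg.mpr (mul_nonneg (hbox i).1 (le_of_lt hqNR))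
    have hflt : ∀ i, ⌊f i * (q:ℝ)^N⌋ < ((q^N : ℕ) : ℤ) := fun i =>
      Int.floor_lt.mpr (by
        push_cast
        exact mul_lt_of_lt_one_left hqNR (hbox i).2)
    set a : Fin s → Fin (q^N) := fun i => ⟨(⌊f i * (q:ℝ)^N⌋).toNat, by
      have h1 := hfl0 i; have h2 := hflt i; omega⟩ with ha
    have hbounds : ∀ i, ((a i : ℕ) : ℝ)/(q:ℝ)^N ≤ f i ∧
        f i < (((a i : ℕ) : ℝ)+1)/(q:ℝ)^N := by
      intro i
      have hcast : ((a i : ℕ) : ℝ) = (⌊f i * (q:ℝ)^N⌋ : ℝ) := by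
        have hz : ((a i : ℕ) : ℤ) = ⌊f i * (q:ℝ)^N⌋ := by
          rw [ha]; exact Int.toNat_of_nonneg (hfl0 i)
        exact_mod_cast congrArg (Int.cast : ℤ → ℝ) hz
      constructor
      · rw [div_le_iff₀ hqNR, hcast]
        exact Int.floor_le _
      · rw [lt_div_iff₀ hqNR, hcast]
        exact Int.lt_floor_add_one _
    have hdig : ∀ (i : Fin s) (n : Fin N), wv a i n = qDigit q (f i) n := by
      intro i n
      rw [hwv]
      exact (qDigit_eq hq1 (hbounds i).1 (hbounds i).2 n.isLt).symm
    have hTzero : T (wv a) = 0 := by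
      have hextdig : ∀ (i : Fin s) (t : ℕ), t < N → ext0 (wv a i) t = qDigit q (f i) t := by
        intro i t h
        simp only [hext0, dif_pos h]
        exact hdig i ⟨t, h⟩
      funext c
      cases c with
      | inl n =>
        simp only [hT, LinearMap.coe_mk, AddHom.coe_mk, Sum.elim_inl, Pi.zero_apply]
        have heq : ∀ i : Fin s, fracCoeff q (k i) (ext0 (wv a i)) (n : ℕ)
            = fracCoeff q (k i) (qDigit q (f i)) (n : ℕ) := by
          intro i
          apply fracCoeff_congr
          intro j hj
          apply hextdig
          have h1 := n.isLt
          have h2 := hdegk i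
          omega
        rw [Finset.sum_congr rfl (fun i _ => heq i)]
        apply hc1
        have h1 := n.isLt
        omega
      | inr n =>
        simp only [hT, LinearMap.coe_mk, AddHom.coe_mk, Sum.elim_inr, Pi.zero_apply]
        have heq : ∀ i : Fin s, fracCoeff q (k' i) (ext0 (wv a i)) (n : ℕ)
            = fracCoeff q (k' i) (qDigit q (f i)) (n : ℕ) := by
          intro i
          apply fracCoeff_congr
          intro j hj
          apply hextdig
          have h1 := n.isLt
          have h2 := hdegk' i
          omega
        rw [Finset.sum_congr rfl (fun i _ => heq i)]
        apply hc2
        have h1 := n.isLt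
        omega
    refine Set.mem_iUnion₂.mpr ⟨a, ?_, ?_⟩
    · simp only [hAS, Finset.mem_filter, Finset.mem_univ, true_and]
      exact hTzero
    · rw [hBox]
      intro i _
      exact ⟨(hbounds i).1, (hbounds i).2⟩
  have hBoxvol : ∀ a, volume (Box a) = (((q:ℝ≥0∞)) ^ (N*s))⁻¹ := by
    have hq0R : (0:ℝ) < (q:ℝ)^N := pow_pos (by exact_mod_cast hq.pos) N
    intro a
    rw [hBox]
    rw [volume_pi_pi]
    have hIco : ∀ i : Fin s, volume (Set.Ico (((a i : ℕ):ℝ)/(q:ℝ)^N)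
        ((((a i : ℕ):ℝ)+1)/(q:ℝ)^N)) = ENNReal.ofReal (1/(q:ℝ)^N) := by
      intro i; rw [Real.volume_Ico]; congr 1; ring
    rw [Finset.prod_congr rfl (fun i _ => hIco i), Finset.prod_const, Finset.card_univ,
      Fintype.card_fin]
    rw [one_div, ENNReal.ofReal_inv_of_pos hq0R, ENNReal.ofReal_pow (by positivity),
      ENNReal.ofReal_natCast, ← ENNReal.inv_pow, ← pow_mul]
  have hwvinj : Function.Injective wv := by
    intro a a' h
    funext i
    apply Fin.ext
    apply digits_inj hq1 N _ _ (a i).isLt (a' i).isLt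
    intro t ht
    have hc := congrFun (congrFun h i) ⟨N-1-t, by omega⟩
    simp only [hwv, Fin.val_mk] at hc
    rw [show N - 1 - (N-1-t) = t from by omega] at hc
    exact hc
  have hAScard : (AS.card : ℕ) * q ^ (R1 + R2) ≤ q ^ (N * s) := by
    have hASle : AS.card ≤ Nat.card (LinearMap.ker T) := by
      have hinj : Function.Injective (fun a : {x // x ∈ AS} => (⟨wv a.1, by
          have h2 := a.2
          simp only [hAS, Finset.mem_filter] at h2
          exact LinearMap.mem_ker.mpr h2.2⟩ : LinearMap.ker T)) := by
        intro x y hxy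
        apply Subtype.ext; apply hwvinj
        simpa [Subtype.ext_iff] using hxy
      calc AS.card = Nat.card {x // x ∈ AS} := by
            simp [Nat.card_eq_fintype_card, Fintype.card_coe]
        _ ≤ Nat.card (LinearMap.ker T) := Nat.card_le_card_of_injective _ hinj
    calc AS.card * q ^ (R1 + R2) ≤ Nat.card (LinearMap.ker T) * q ^ (R1+R2) :=
          Nat.mul_le_mul_right _ hASle
      _ = q ^ (N*s) := hcard
  calc volume _ ≤ ∑ a ∈ AS, volume (Box a) :=
        le_trans (measure_mono hsub) (measure_biUnion_finset_le _ _)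
    _ = (AS.card : ℝ≥0∞) * ((q:ℝ≥0∞) ^ (N*s))⁻¹ := by
        rw [Finset.sum_congr rfl (fun a _ => hBoxvol a), Finset.sum_const, nsmul_eq_mul]
    _ ≤ ((q : ℝ≥0∞)⁻¹) ^ (R1 + R2) := by
        have h1 : (AS.card : ℝ≥0∞) * (q:ℝ≥0∞)^(R1+R2) ≤ (q:ℝ≥0∞)^(N*s) := by
          exact_mod_cast Nat.cast_le.mpr hAScard
        rw [← ENNReal.inv_pow, ENNReal.le_inv_iff_mul_le]
        calc (AS.card : ℝ≥0∞) * ((q:ℝ≥0∞)^(N*s))⁻¹ * (q:ℝ≥0∞)^(R1+R2)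
            = (AS.card : ℝ≥0∞) * (q:ℝ≥0∞)^(R1+R2) * ((q:ℝ≥0∞)^(N*s))⁻¹ := by ring
          _ ≤ (q:ℝ≥0∞)^(N*s) * ((q:ℝ≥0∞)^(N*s))⁻¹ := mul_le_mul_left h1 _
          _ ≤ 1 := ENNReal.mul_inv_le_one _


lemma tsum_pi_prod {α : Type*} (g : α → ℝ≥0∞) (s : ℕ) :
    ∑' k : Fin s → α, ∏ i, g (k i) = (∑' a, g a) ^ s := by
  induction s with
  | zero =>
    haveI : Unique (Fin 0 → α) := inferInstance
    rw [tsum_eq_single default (fun b hb => absurd (Subsingleton.elim b default) hb)]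
    simp
  | succ n ih =>
    have he := (Fin.consEquiv (fun _ : Fin (n+1) => α)).tsum_eq
      (f := fun k : Fin (n+1) → α => ∏ i, g (k i))
    rw [← he]
    have hterm : ∀ p : α × (Fin n → α),
        (∏ i, g ((Fin.consEquiv (fun _ : Fin (n+1) => α)) (p.1, p.2) i))
          = g p.1 * ∏ i : Fin n, g (p.2 i) := by
      intro p
      simp [Fin.consEquiv, Fin.prod_univ_succ]
    calc ∑' p : α × (Fin n → α), ∏ i, g ((Fin.consEquiv (fun _ : Fin (n+1) => α)) p i)
        = ∑' (a : α) (kk : Fin n → α), g a * ∏ i, g (kk i) := by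
          rw [← ENNReal.tsum_prod]
          exact tsum_congr fun p => hterm p
      _ = (∑' a, g a) * ∑' kk : Fin n → α, ∏ i, g (kk i) := by
          rw [← ENNReal.tsum_mul_right]
          exact tsum_congr fun a => ENNReal.tsum_mul_left
      _ = (∑' a, g a) ^ (n+1) := by rw [ih, pow_succ, mul_comm]

open Polynomial in
lemma tsum_poly_ne_top {q : ℕ} (hq : 1 < q) :
    ∑' p : Polynomial (ZMod q), ((q:ℝ≥0∞)⁻¹)^(p.natDegree + p.natDegree/2) ≠ ⊤ := by
  classical
  haveI : NeZero q := ⟨by omega⟩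
  have hqe0 : (q:ℝ≥0∞) ≠ 0 := by
    simp only [ne_eq, Nat.cast_eq_zero]; omega
  have hqet : (q:ℝ≥0∞) ≠ ⊤ := ENNReal.natCast_ne_top q
  have h1 : ∑' p : Polynomial (ZMod q), ((q:ℝ≥0∞)⁻¹)^(p.natDegree + p.natDegree/2)
      = ∑' (r : ℕ), ∑' (_ : {p : Polynomial (ZMod q) // p.natDegree = r}),
          ((q:ℝ≥0∞)⁻¹)^(r + r/2) := by
    rw [← (Equiv.sigmaFiberEquiv (fun p : Polynomial (ZMod q) => p.natDegree)).tsum_eq]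
    rw [ENNReal.tsum_sigma']
    exact tsum_congr fun r => tsum_congr fun p => by rw [Equiv.sigmaFiberEquiv]; simp [p.2]
  have hfibinj : ∀ r : ℕ, Function.Injective
      (fun p : {p : Polynomial (ZMod q) // p.natDegree = r} =>
        (fun t : Fin (r+1) => (p.1).coeff t)) := by
    intro r p p' h
    apply Subtype.ext
    apply Polynomial.ext
    intro n
    by_cases hn : n < r + 1
    · exact congrFun h ⟨n, hn⟩
    · rw [coeff_eq_zero_of_natDegree_lt (by rw [p.2]; omega),
        coeff_eq_zero_of_natDegree_lt (by rw [p'.2]; omega)]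
  have hfin : ∀ r : ℕ, Finite {p : Polynomial (ZMod q) // p.natDegree = r} :=
    fun r => Finite.of_injective _ (hfibinj r)
  have hcard : ∀ r : ℕ, Nat.card {p : Polynomial (ZMod q) // p.natDegree = r} ≤ q^(r+1) := by
    intro r
    calc Nat.card {p : Polynomial (ZMod q) // p.natDegree = r}
        ≤ Nat.card (Fin (r+1) → ZMod q) := Nat.card_le_card_of_injective _ (hfibinj r)
      _ = q^(r+1) := by
          rw [Nat.card_eq_fintype_card, Fintype.card_fun]
          simp [ZMod.card]
  have h2 : ∀ r : ℕ, ∑' (_ : {p : Polynomial (ZMod q) // p.natDegree = r}),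
      ((q:ℝ≥0∞)⁻¹)^(r + r/2)
        = (Nat.card {p : Polynomial (ZMod q) // p.natDegree = r} : ℝ≥0∞)
            * ((q:ℝ≥0∞)⁻¹)^(r + r/2) := by
    intro r
    haveI := hfin r
    letI := Fintype.ofFinite {p : Polynomial (ZMod q) // p.natDegree = r}
    rw [tsum_fintype, Finset.sum_const, nsmul_eq_mul, Finset.card_univ,
      Nat.card_eq_fintype_card]
  rw [h1]
  have h3 : ∑' (r : ℕ), ∑' (_ : {p : Polynomial (ZMod q) // p.natDegree = r}),
      ((q:ℝ≥0∞)⁻¹)^(r + r/2) ≤ ∑' r : ℕ, (q:ℝ≥0∞) * ((q:ℝ≥0∞)⁻¹)^(r/2) := by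
    apply ENNReal.tsum_le_tsum
    intro r
    rw [h2 r]
    have hc : (Nat.card {p : Polynomial (ZMod q) // p.natDegree = r} : ℝ≥0∞) ≤
        ((q:ℝ≥0∞))^(r+1) := by
      have := hcard r
      exact_mod_cast (by exact_mod_cast Nat.cast_le.mpr this : ((Nat.card _ : ℕ) : ℝ≥0∞) ≤ ((q^(r+1) : ℕ) : ℝ≥0∞))
    calc (Nat.card {p : Polynomial (ZMod q) // p.natDegree = r} : ℝ≥0∞)
          * ((q:ℝ≥0∞)⁻¹)^(r + r/2)
        ≤ ((q:ℝ≥0∞))^(r+1) * ((q:ℝ≥0∞)⁻¹)^(r + r/2) := mul_le_mul_left hc _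
      _ = (q:ℝ≥0∞) * ((q:ℝ≥0∞)⁻¹)^(r/2) := by
          rw [pow_succ, pow_add, ← mul_assoc]
          rw [show ((q:ℝ≥0∞))^r * (q:ℝ≥0∞) * ((q:ℝ≥0∞)⁻¹)^r
              = ((q:ℝ≥0∞) * (q:ℝ≥0∞)⁻¹)^r * (q:ℝ≥0∞) from by rw [mul_pow]; ring]
          rw [ENNReal.mul_inv_cancel hqe0 hqet, one_pow, one_mul]
  have h4 : ∑' r : ℕ, (q:ℝ≥0∞) * ((q:ℝ≥0∞)⁻¹)^(r/2)
      = (q:ℝ≥0∞) * (2 * (1 - (q:ℝ≥0∞)⁻¹)⁻¹) := by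
    rw [ENNReal.tsum_mul_left]
    congr 1
    rw [← tsum_even_add_odd ENNReal.summable ENNReal.summable]
    have he : ∀ kk : ℕ, ((q:ℝ≥0∞)⁻¹)^((2*kk)/2) = ((q:ℝ≥0∞)⁻¹)^kk := by
      intro kk; congr 1; omega
    have ho : ∀ kk : ℕ, ((q:ℝ≥0∞)⁻¹)^((2*kk+1)/2) = ((q:ℝ≥0∞)⁻¹)^kk := by
      intro kk; congr 1; omega
    rw [tsum_congr he, tsum_congr ho, ENNReal.tsum_geometric, two_mul]
  apply ne_top_of_le_ne_top _ h3
  rw [h4]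
  apply ENNReal.mul_ne_top hqet
  apply ENNReal.mul_ne_top (by simp)
  rw [ne_eq, ENNReal.inv_eq_top, tsub_eq_zero_iff_le]
  intro hle
  have : (q:ℝ≥0∞)⁻¹ < 1 := ENNReal.inv_lt_one.mpr (by exact_mod_cast hq)
  exact absurd hle (not_le.mpr this)


lemma nat_sum_div_two_le {ι : Type*} (s : Finset ι) (f : ι → ℕ) :
    ∑ i ∈ s, f i / 2 ≤ (∑ i ∈ s, f i) / 2 := by
  classical
  induction s using Finset.induction with
  | empty => simp
  | @insert a t hx ih =>
    rw [Finset.sum_insert hx, Finset.sum_insert hx]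
    omega


/-- Lemma 3 of the paper: given perturbation functions `B_j` (with `B_j(k)` always
zero or coprime to `k`, and not all zero on any tuple), the set of
`(f_1,…,f_s) ∈ Z̄^s` for which infinitely many tuples `(k_1,…,k_s)` of nonzero
polynomials with gcd `1` satisfy both `ν({∑ k_j f_j}) ≤ -(r_1+⋯+r_s)` and
`ν({∑ (k_j + B_j(k_j)) f_j}) ≤ -⌊(r_1+⋯+r_s)/2⌋` (where `r_j = deg k_j`) has Haar
measure zero. -/
theorem measure_zero_of_double_condition (q : ℕ) (hq : q.Prime) (s : ℕ) (hs : 1 ≤ s)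
    (B : Fin s → Polynomial (ZMod q) → Polynomial (ZMod q))
    (hB : ∀ j k, B j k = 0 ∨ IsCoprime (B j k) k)
    (hB0 : ∀ k : Fin s → Polynomial (ZMod q), ¬ ∀ j, B j (k j) = 0) :
    volume {f : Fin s → ℝ | (∀ i, f i ∈ Set.Ico (0:ℝ) 1) ∧
        {k : Fin s → Polynomial (ZMod q) |
          (∀ i, k i ≠ 0) ∧ GcdOne k ∧
          (∀ n : ℕ, n + 2 ≤ ∑ i, (k i).natDegree →
            ∑ i, fracCoeff q (k i) (qDigit q (f i)) n = 0) ∧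
          (∀ n : ℕ, n + 2 ≤ (∑ i, (k i).natDegree) / 2 →
            ∑ i, fracCoeff q (k i + B i (k i)) (qDigit q (f i)) n = 0)}.Infinite} =
      0 := by
  classical
  haveI := Fact.mk hq
  have hq1 : 1 < q := hq.one_lt
  have hqe0 : (q:ℝ≥0∞) ≠ 0 := by simp only [ne_eq, Nat.cast_eq_zero]; omega
  have hqet : (q:ℝ≥0∞) ≠ ⊤ := ENNReal.natCast_ne_top q
  set Ek : (Fin s → Polynomial (ZMod q)) → Set (Fin s → ℝ) := fun k =>
    {f | (∀ i, f i ∈ Set.Ico (0:ℝ) 1) ∧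
      (∀ n : ℕ, n + 2 ≤ ∑ i, (k i).natDegree →
        ∑ i, fracCoeff q (k i) (qDigit q (f i)) n = 0) ∧
      (∀ n : ℕ, n + 2 ≤ (∑ i, (k i).natDegree) / 2 →
        ∑ i, fracCoeff q (k i + B i (k i)) (qDigit q (f i)) n = 0)} with hEk
  set K : Set (Fin s → Polynomial (ZMod q)) :=
    {k | (∀ i, k i ≠ 0) ∧ GcdOne k ∧ 1 ≤ ∑ i, (k i).natDegree} with hK
  -- the set of tuples of total degree zero is finite
  have hD : {k : Fin s → Polynomial (ZMod q) | ∑ i, (k i).natDegree = 0}.Finite := by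
    apply Set.Finite.of_finite_image (f := fun k (i : Fin s) => (k i).coeff 0)
    · exact Set.toFinite _
    · intro k hk k' hk' h
      funext i
      have h1 : (k i).natDegree = 0 := by
        have := Finset.sum_eq_zero_iff.mp hk i (Finset.mem_univ i); exact this
      have h2 : (k' i).natDegree = 0 := by
        have := Finset.sum_eq_zero_iff.mp hk' i (Finset.mem_univ i); exact this
      rw [Polynomial.eq_C_of_natDegree_eq_zero h1, Polynomial.eq_C_of_natDegree_eq_zero h2]
      exact congrArg Polynomial.C (congrFun h i)
  by_cases hKfin : K.Finite
  · -- then the target set is empty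
    apply measure_mono_null (t := ∅) _ measure_empty
    intro f hf
    exfalso
    apply hf.2
    apply Set.Finite.subset (Set.Finite.union hKfin hD)
    intro k hk
    by_cases hdeg : 1 ≤ ∑ i, (k i).natDegree
    · exact Or.inl ⟨hk.1, hk.2.1, hdeg⟩
    · exact Or.inr (by simp only [Set.mem_setOf_eq]; omega)
  · haveI hcam : Countable (AddMonoidAlgebra (ZMod q) ℕ) := by
      exact Function.Injective.countable (f := AddMonoidAlgebra.coeff)
        (fun a b h => by cases a; cases b; simpa using h)
    haveI hcp : Countable (Polynomial (ZMod q)) :=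
      Function.Injective.countable (f := fun p : Polynomial (ZMod q) => p.toFinsupp)
        (fun p p' h => by cases p; cases p'; simpa using h)
    haveI : Countable ↥K := Subtype.countable
    haveI : Infinite ↥K := Set.infinite_coe_iff.mpr hKfin
    obtain ⟨dK⟩ := nonempty_denumerable ↥K
    set e : ℕ ≃ ↥K := (Denumerable.eqv ↥K).symm with he
    have hsub2 : {f : Fin s → ℝ | (∀ i, f i ∈ Set.Ico (0:ℝ) 1) ∧
        {k : Fin s → Polynomial (ZMod q) |
          (∀ i, k i ≠ 0) ∧ GcdOne k ∧
          (∀ n : ℕ, n + 2 ≤ ∑ i, (k i).natDegree →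
            ∑ i, fracCoeff q (k i) (qDigit q (f i)) n = 0) ∧
          (∀ n : ℕ, n + 2 ≤ (∑ i, (k i).natDegree) / 2 →
            ∑ i, fracCoeff q (k i + B i (k i)) (qDigit q (f i)) n = 0)}.Infinite} ⊆
        Filter.limsup (fun n => Ek ((e n : ↥K) : Fin s → Polynomial (ZMod q)))
          Filter.atTop := by
      intro f hf
      rw [Filter.mem_limsup_iff_frequently_mem, Filter.frequently_atTop]
      intro n0
      set Sf := {k : Fin s → Polynomial (ZMod q) |
          (∀ i, k i ≠ 0) ∧ GcdOne k ∧
          (∀ n : ℕ, n + 2 ≤ ∑ i, (k i).natDegree →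
            ∑ i, fracCoeff q (k i) (qDigit q (f i)) n = 0) ∧
          (∀ n : ℕ, n + 2 ≤ (∑ i, (k i).natDegree) / 2 →
            ∑ i, fracCoeff q (k i + B i (k i)) (qDigit q (f i)) n = 0)} with hSf
      have hSfK : (Sf ∩ K).Infinite := by
        apply Set.Infinite.mono _ (Set.Infinite.diff hf.2 hD)
        intro k hk
        refine ⟨hk.1, hk.1.1, hk.1.2.1, ?_⟩
        have := hk.2
        simp only [Set.mem_setOf_eq] at this
        omega
      have hpre : ((fun n : ℕ => ((e n : ↥K) : Fin s → Polynomial (ZMod q))) ⁻¹'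
          (Sf ∩ K)).Infinite := by
        apply Set.Infinite.preimage hSfK
        intro k hk
        exact ⟨e.symm ⟨k, hk.2⟩, by simp⟩
      obtain ⟨n1, hn1mem, hn1ge⟩ : ∃ n1, n1 ∈ ((fun n : ℕ =>
          ((e n : ↥K) : Fin s → Polynomial (ZMod q))) ⁻¹' (Sf ∩ K)) ∧ n0 ≤ n1 := by
        by_contra hno
        push_neg at hno
        apply hpre
        apply Set.Finite.subset (Set.finite_Iio n0)
        intro n hn
        simp only [Set.mem_Iio]
        exact hno n hn
      exact ⟨n1, hn1ge, ⟨hf.1, hn1mem.1.2.2.1, hn1mem.1.2.2.2⟩⟩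
    apply measure_mono_null hsub2
    apply MeasureTheory.measure_limsup_atTop_eq_zero
    have hbound : ∀ x : ↥K, volume (Ek (x : Fin s → Polynomial (ZMod q))) ≤
        (q:ℝ≥0∞)^2 * ∏ i, ((q:ℝ≥0∞)⁻¹)^(((x : Fin s → Polynomial (ZMod q)) i).natDegree
          + ((x : Fin s → Polynomial (ZMod q)) i).natDegree / 2) := by
      intro x
      obtain ⟨hk1, hk2, hk3⟩ := x.2
      refine le_trans (measure_Ek_le hq hs B hB hB0 _ hk1 hk2 hk3) ?_
      set m := ∑ i, ((x : Fin s → Polynomial (ZMod q)) i).natDegree with hm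
      have hE : ∑ i, (((x : Fin s → Polynomial (ZMod q)) i).natDegree
          + ((x : Fin s → Polynomial (ZMod q)) i).natDegree / 2)
            ≤ (m - 1) + (m / 2 - 1) + 2 := by
        rw [Finset.sum_add_distrib]
        have h1 := nat_sum_div_two_le Finset.univ
          (fun i => ((x : Fin s → Polynomial (ZMod q)) i).natDegree)
        omega
      rw [Finset.prod_pow_eq_pow_sum]
      have key : ∀ R : ℕ, ((q:ℝ≥0∞)⁻¹)^R = (q:ℝ≥0∞)^2 * ((q:ℝ≥0∞)⁻¹)^(R+2) := by
        intro R
        calc ((q:ℝ≥0∞)⁻¹)^R = 1 * ((q:ℝ≥0∞)⁻¹)^R := (one_mul _).symm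
          _ = ((q:ℝ≥0∞) * (q:ℝ≥0∞)⁻¹)^2 * ((q:ℝ≥0∞)⁻¹)^R := by
              rw [ENNReal.mul_inv_cancel hqe0 hqet, one_pow]
          _ = (q:ℝ≥0∞)^2 * ((q:ℝ≥0∞)⁻¹)^(R+2) := by
              rw [mul_pow, pow_add]; ring
      calc ((q : ℝ≥0∞)⁻¹) ^ ((m - 1) + (m / 2 - 1))
          = (q:ℝ≥0∞)^2 * ((q:ℝ≥0∞)⁻¹)^((m - 1) + (m / 2 - 1) + 2) := key _
        _ ≤ (q:ℝ≥0∞)^2 * ((q:ℝ≥0∞)⁻¹)^(∑ i, (((x : Fin s → Polynomial (ZMod q)) i).natDegree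
              + ((x : Fin s → Polynomial (ZMod q)) i).natDegree / 2)) := by
            apply mul_le_mul_right
            exact pow_le_pow_right_of_le_one'
              (ENNReal.inv_le_one.mpr (by exact_mod_cast hq1.le)) hE
    apply ne_top_of_le_ne_top (b := (q:ℝ≥0∞)^2 * (∑' p : Polynomial (ZMod q),
        ((q:ℝ≥0∞)⁻¹)^(p.natDegree + p.natDegree / 2))^s)
    · apply ENNReal.mul_ne_top (ENNReal.pow_ne_top hqet)
      exact ENNReal.pow_ne_top (tsum_poly_ne_top hq1)
    · calc ∑' n : ℕ, volume (Ek ((e n : ↥K) : Fin s → Polynomial (ZMod q)))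
          = ∑' x : ↥K, volume (Ek (x : Fin s → Polynomial (ZMod q))) :=
            e.tsum_eq (f := fun x : ↥K => volume (Ek (x : Fin s → Polynomial (ZMod q))))
        _ ≤ ∑' x : ↥K, ((q:ℝ≥0∞)^2
              * ∏ i, ((q:ℝ≥0∞)⁻¹)^(((x : Fin s → Polynomial (ZMod q)) i).natDegree
                + ((x : Fin s → Polynomial (ZMod q)) i).natDegree / 2)) :=
            ENNReal.tsum_le_tsum hbound
        _ ≤ ∑' k : Fin s → Polynomial (ZMod q), ((q:ℝ≥0∞)^2
              * ∏ i, ((q:ℝ≥0∞)⁻¹)^((k i).natDegree + (k i).natDegree / 2)) :=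
            Summable.tsum_le_tsum_of_inj Subtype.val Subtype.val_injective
              (fun _ _ => zero_le) (fun x => le_rfl) ENNReal.summable ENNReal.summable
        _ = (q:ℝ≥0∞)^2 * (∑' p : Polynomial (ZMod q),
              ((q:ℝ≥0∞)⁻¹)^(p.natDegree + p.natDegree / 2))^s := by
            rw [ENNReal.tsum_mul_left]
            congr 1
            exact tsum_pi_prod
              (fun p : Polynomial (ZMod q) => ((q:ℝ≥0∞)⁻¹)^(p.natDegree + p.natDegree / 2)) s
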